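/- Fix integers k ≥ 1 and n ≥ 1, and let G be the graph whose vertices are the injective tuples x : Fin k → Fin n, with x adjacent to y if and only if there exists a coordinate i such that x(j) = y(j) for all j ≠ i and either x(i) + 1 = y(i) or y(i) + 1 = x(i) (as natural numbers). Then two injective tuples x and y lie in the same connected component of G (are reachable from one another) if and only if they have the same relative order, i.e., for all coordinates i, j one has x(i) < x(j) ↔ y(i) < y(j). -/

import Mathlib

/-- Configuration moves of `k` distinguishable hard-core bosons on the path with `n`
vertices: `x` and `y` (injective tuples) are related iff they agree except at one
coordinate `i`, where they differ by one site. -/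
def hcRel (n k : ℕ) (x y : {x : Fin k → Fin n // Function.Injective x}) : Prop :=
  ∃ i : Fin k, (∀ j : Fin k, j ≠ i → x.1 j = y.1 j) ∧
    ((x.1 i : ℕ) + 1 = (y.1 i : ℕ) ∨ (y.1 i : ℕ) + 1 = (x.1 i : ℕ))

/-- The configuration-space graph of `k` distinguishable hard-core bosons on the path
with `n` vertices. -/
def hcGraph (n k : ℕ) : SimpleGraph {x : Fin k → Fin n // Function.Injective x} :=
  SimpleGraph.fromRel (hcRel n k)

namespace HC

variable {n k : ℕ}

/-- rank of particle `i`: number of particles strictly below it. -/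
def rk (x : Fin k → Fin n) (i : Fin k) : ℕ :=
  (Finset.univ.filter (fun j => x j < x i)).card

lemma rk_lt (x : Fin k → Fin n) (i : Fin k) : rk x i < k := by
  have hsub : Finset.univ.filter (fun j => x j < x i) ⊂ Finset.univ := by
    refine Finset.ssubset_univ_iff.2 ?_
    intro h
    have : i ∈ Finset.univ.filter (fun j => x j < x i) := by rw [h]; exact Finset.mem_univ i
    simp at this
  simpa [rk] using Finset.card_lt_card hsub

lemma rk_le (x : Fin k → Fin n) (hx : Function.Injective x) (i : Fin k) :
    rk x i ≤ (x i : ℕ) := by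
  have := Finset.card_le_card_of_injOn
    (s := Finset.univ.filter (fun j => x j < x i)) (t := Finset.Iio (x i)) x
    (fun j hj => Finset.mem_Iio.2 (Finset.mem_filter.1 hj).2)
    (fun a _ b _ hab => hx hab)
  simpa [rk, Fin.card_Iio] using this

lemma rk_strict {x : Fin k → Fin n} {a b : Fin k} (h : x a < x b) :
    rk x a < rk x b := by
  refine Finset.card_lt_card ?_
  constructor
  · intro j hj
    simp only [Finset.mem_filter, Finset.mem_univ, true_and] at hj ⊢
    exact hj.trans h
  · intro hsub
    have : a ∈ Finset.univ.filter (fun j => x j < x b) := by simp [h]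
    have := hsub this
    simp at this

/-- a single move preserves relative order. -/
lemma step_order {x y : {x : Fin k → Fin n // Function.Injective x}}
    (h : (hcGraph n k).Adj x y) :
    ∀ a b : Fin k, (x.1 a < x.1 b ↔ y.1 a < y.1 b) := by
  have hrel : ∃ i : Fin k, (∀ j : Fin k, j ≠ i → x.1 j = y.1 j) ∧
      ((x.1 i : ℕ) + 1 = (y.1 i : ℕ) ∨ (y.1 i : ℕ) + 1 = (x.1 i : ℕ)) := by
    rcases h.2 with h' | h'
    · exact h'
    · obtain ⟨i, hi, hc⟩ := h'
      exact ⟨i, fun j hj => (hi j hj).symm, hc.symm⟩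
  obtain ⟨i, hoff, hc⟩ := hrel
  intro a b
  rcases eq_or_ne a i with rfl | ha
  · rcases eq_or_ne b a with rfl | hb
    · simp
    · have hxb : x.1 b = y.1 b := hoff b hb
      have h1 : (x.1 b : ℕ) ≠ (x.1 a : ℕ) := fun e => hb (x.2 (Fin.val_injective e).symm ▸ rfl)
      have h2 : (y.1 b : ℕ) ≠ (y.1 a : ℕ) := fun e => hb (y.2 (Fin.val_injective e).symm ▸ rfl)
      rw [Fin.lt_def, Fin.lt_def, ← hxb] at *
      omega
  · rcases eq_or_ne b i with rfl | hb
    · have hxa : x.1 a = y.1 a := hoff a ha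
      have h1 : (x.1 a : ℕ) ≠ (x.1 b : ℕ) := fun e => ha (x.2 (Fin.val_injective e) ▸ rfl)
      have h2 : (y.1 a : ℕ) ≠ (y.1 b : ℕ) := fun e => ha (y.2 (Fin.val_injective e) ▸ rfl)
      rw [Fin.lt_def, Fin.lt_def, ← hxa] at *
      omega
    · rw [hoff a ha, hoff b hb]

lemma walk_order {x y : {x : Fin k → Fin n // Function.Injective x}}
    (w : (hcGraph n k).Walk x y) :
    ∀ a b : Fin k, (x.1 a < x.1 b ↔ y.1 a < y.1 b) := by
  induction w with
  | nil => simp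
  | cons hadj p ih =>
    intro a b
    exact (step_order hadj a b).trans (ih a b)

lemma reach_order {x y : {x : Fin k → Fin n // Function.Injective x}}
    (h : (hcGraph n k).Reachable x y) :
    ∀ a b : Fin k, (x.1 a < x.1 b ↔ y.1 a < y.1 b) :=
  h.elim fun w => walk_order w

lemma rk_congr {x y : Fin k → Fin n}
    (h : ∀ a b : Fin k, (x a < x b ↔ y a < y b)) (i : Fin k) :
    rk x i = rk y i := by
  unfold rk
  congr 1
  exact Finset.filter_congr fun j _ => by simpa using h j i

/-- canonical configuration. -/
def canon (x : {x : Fin k → Fin n // Function.Injective x}) :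
    {x : Fin k → Fin n // Function.Injective x} := by
  have hkn : k ≤ n := by
    simpa using Fintype.card_le_of_injective x.1 x.2
  refine ⟨fun i => ⟨rk x.1 i, lt_of_lt_of_le (rk_lt x.1 i) hkn⟩, ?_⟩
  intro a b hab
  have h : rk x.1 a = rk x.1 b := congrArg Fin.val hab
  by_contra hne
  have hxne : x.1 a ≠ x.1 b := fun e => hne (x.2 e)
  rcases lt_or_gt_of_ne hxne with hlt | hlt
  · exact absurd h (rk_strict hlt).ne
  · exact absurd h.symm (rk_strict hlt).ne

lemma reach_canon (x : {x : Fin k → Fin n // Function.Injective x}) :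
    (hcGraph n k).Reachable x (canon x) := by
  generalize hN : (∑ i, (x.1 i : ℕ)) = N
  induction N using Nat.strong_induction_on generalizing x with
  | _ N ih =>
  by_cases hcan : ∀ i, (x.1 i : ℕ) = rk x.1 i
  · have : x = canon x := by
      apply Subtype.ext; funext i
      exact Fin.ext (hcan i)
    exact this ▸ SimpleGraph.Reachable.refl x
  · push_neg at hcan
    set S := Finset.univ.filter (fun i => rk x.1 i < (x.1 i : ℕ)) with hS
    have hSne : S.Nonempty := by
      obtain ⟨i, hi⟩ := hcan
      exact ⟨i, by simp [hS, lt_of_le_of_ne (rk_le x.1 x.2 i) (Ne.symm hi)]⟩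
    obtain ⟨i, hiS, hmin⟩ := S.exists_min_image (fun i => (x.1 i : ℕ)) hSne
    have hi : rk x.1 i < (x.1 i : ℕ) := by simpa [hS] using hiS
    have hpos : 1 ≤ (x.1 i : ℕ) := by omega
    -- site x i - 1 is unoccupied
    have hunocc : ∀ j, (x.1 j : ℕ) ≠ (x.1 i : ℕ) - 1 := by
      intro j hj
      have hjS : j ∉ S := by
        intro hjS
        have := hmin j hjS
        omega
      have hrj : rk x.1 j = (x.1 j : ℕ) :=
        le_antisymm (rk_le x.1 x.2 j) (by simp [hS] at hjS; omega)
      -- rk i = rk j + 1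
      have hset : Finset.univ.filter (fun b => x.1 b < x.1 i)
          = insert j (Finset.univ.filter (fun b => x.1 b < x.1 j)) := by
        ext b
        simp only [Finset.mem_filter, Finset.mem_univ, true_and, Finset.mem_insert]
        rw [Fin.lt_def, Fin.lt_def]
        constructor
        · intro hb
          rcases eq_or_ne ((x.1 b : ℕ)) ((x.1 j : ℕ)) with he | hne
          · exact Or.inl (x.2 (Fin.val_injective he))
          · right; omega
        · rintro (rfl | hb) <;> omega
      have hjnot : j ∉ Finset.univ.filter (fun b => x.1 b < x.1 j) := by simp
      have : rk x.1 i = rk x.1 j + 1 := by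
        rw [rk, hset, Finset.card_insert_of_notMem hjnot]; rfl
      omega
    -- the moved configuration
    set v : Fin n := ⟨(x.1 i : ℕ) - 1, by omega⟩ with hv
    set yf : Fin k → Fin n := fun b => if b = i then v else x.1 b with hyf
    have hyinj : Function.Injective yf := by
      intro a b hab
      simp only [hyf] at hab
      split_ifs at hab with h1 h2 h2
      · exact h1.trans h2.symm
      · exact absurd (congrArg Fin.val hab).symm (hunocc b)
      · exact absurd (congrArg Fin.val hab) (hunocc a)
      · exact x.2 hab
    set y : {x : Fin k → Fin n // Function.Injective x} := ⟨yf, hyinj⟩ with hy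
    have hadj : (hcGraph n k).Adj x y := by
      constructor
      · intro he
        have : x.1 i = yf i := congrArg (fun z => z.1 i) he
        simp only [hyf, if_pos rfl, hv] at this
        have := congrArg Fin.val this
        simp at this
        omega
      · left
        refine ⟨i, fun j hj => by simp [hy, hyf, hj], Or.inr ?_⟩
        simp only [hy, hyf, if_pos rfl, hv, ↓reduceIte, Fin.val_mk]
        omega
    have hord := step_order hadj
    have hsum : (∑ b, (y.1 b : ℕ)) < N := by
      rw [← hN]
      refine Finset.sum_lt_sum (fun b _ => ?_) ⟨i, Finset.mem_univ i, ?_⟩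
      · simp only [hy, hyf]
        split_ifs with hbi
        · subst hbi; simp only [hv]; omega
        · exact le_refl _
      · simp only [hy, hyf, if_pos rfl, hv, ↓reduceIte, Fin.val_mk]
        omega
    have hreach : (hcGraph n k).Reachable y (canon y) := ih _ hsum y rfl
    have hcc : canon y = canon x := by
      apply Subtype.ext; funext j
      exact Fin.ext (rk_congr (fun a b => (hord a b).symm) j)
    exact (hadj.reachable.trans hreach).trans (hcc ▸ SimpleGraph.Reachable.refl _)

end HC


/-- two hard-core configurations on a path are connected by a sequence of
moves iff their particles have the same relative order. -/
theorem stmt14 (n k : ℕ) (hk : 1 ≤ k) (hn : 1 ≤ n) :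
    ∀ x y : {x : Fin k → Fin n // Function.Injective x},
      (hcGraph n k).Reachable x y ↔
        ∀ i j : Fin k, (x.1 i < x.1 j ↔ y.1 i < y.1 j) := by
  intro x y
  constructor
  · exact fun h => HC.reach_order h
  · intro h
    have hcc : HC.canon x = HC.canon y := by
      apply Subtype.ext; funext j
      exact Fin.ext (HC.rk_congr h j)
    exact (HC.reach_canon x).trans (hcc ▸ (HC.reach_canon y).symm)
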